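/- Let X be a compact metric space with Borel σ-algebra B, μ a Borel probability measure on X, F a sub-σ-algebra of B, and x ↦ μ_x a regular version of the conditional probability of μ given F (an F-measurable map from X to the space of Borel probability measures on X such that E(f | F)(x) = ∫ f dμ_x for μ-almost every x, for every bounded Borel function f). Then μ⊠_F μ(Δ) = 0, where Δ is the diagonal of X×X, if and only if μ_x is atomless for μ-almost all x ∈ X. -/

import Mathlib

open MeasureTheory Filter Topology Set
open scoped symmDiff Classical ENNReal NNReal

section Defs

variable {X : Type*}

/-- The pair `(x, y)` is (positively) asymptotic for `T`. -/
def IsAsymptoticPair [PseudoMetricSpace X] (T : X → X) (x y : X) : Prop :=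
  Tendsto (fun n : ℕ => dist (T^[n] x) (T^[n] y)) atTop (𝓝 0)

/-- Shannon entropy of the finite measurable partition of `X` given by the fibers of a
map `p` into a finite type. -/
noncomputable def partEntropy [MeasurableSpace X] (μ : Measure X) {ι : Type*} [Fintype ι]
    (p : X → ι) : ℝ :=
  ∑ i : ι, Real.negMulLog (μ (p ⁻¹' {i})).toReal

/-- Conditional Shannon entropy `H(P | F)` of the finite partition given by the fibers
of `p` with respect to the sub-σ-algebra `F`:
`H(P|F) = ∑_{A ∈ P} ∫ -E(1_A|F) log E(1_A|F) dμ`. -/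
noncomputable def condPartEntropy [MeasurableSpace X] (μ : Measure X)
    (F : MeasurableSpace X) {ι : Type*} [Fintype ι] (p : X → ι) : ℝ :=
  ∑ i : ι, ∫ x, Real.negMulLog ((μ[(p ⁻¹' {i}).indicator (fun _ => (1 : ℝ)) | F]) x) ∂μ

/-- The σ-algebra `σ(P^-)` generated by the partitions `T^{-n}P`, `n ≥ 1`
(the "past" of the partition given by the fibers of `p`). -/
def partPast (T : X → X) {ι : Type*} (p : X → ι) : MeasurableSpace X :=
  ⨆ n : ℕ, MeasurableSpace.comap (fun x => p (T^[n + 1] x)) ⊤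

/-- The σ-algebra `σ(P^T)` generated by the partitions `T^{-n}P`, `n ∈ ℤ`, where `S = T⁻¹`. -/
def partHull (T S : X → X) {ι : Type*} (p : X → ι) : MeasurableSpace X :=
  ⨆ n : ℕ,
    MeasurableSpace.comap (fun x => p (T^[n] x)) ⊤ ⊔
      MeasurableSpace.comap (fun x => p (S^[n] x)) ⊤

/-- Kolmogorov–Sinai entropy of a finite partition: `h_μ(P, T) = H(P | P^-)`. -/
noncomputable def partKS [MeasurableSpace X] (μ : Measure X) (T : X → X) {ι : Type*}
    [Fintype ι] (p : X → ι) : ℝ :=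
  condPartEntropy μ (partPast T p) p

/-- Kolmogorov–Sinai (measure-theoretic) entropy `h_μ(X, T)` of the system:
the supremum over all finite measurable partitions `P` of `h_μ(P, T)`. -/
noncomputable def ksEntropy [MeasurableSpace X] (μ : Measure X) (T : X → X) : ℝ≥0∞ :=
  ⨆ (k : ℕ) (p : X → Fin k) (_ : Measurable p), ENNReal.ofReal (partKS μ T p)

/-- The Pinsker σ-algebra `Π_μ`: the σ-algebra generated by all finite measurable
partitions with zero Kolmogorov–Sinai entropy. -/
def pinskerAlg [MeasurableSpace X] (μ : Measure X) (T : X → X) : MeasurableSpace X :=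
  ⨆ (k : ℕ) (p : X → Fin k) (_ : Measurable p) (_ : partKS μ T p = 0),
    MeasurableSpace.comap p ⊤

/-- Minimal cardinality of a subcover of `⋁_{i=0}^{n-1} T^{-i} C`, where `C` is a
finite cover of `X`. -/
noncomputable def coverNum (T : X → X) {k : ℕ} (C : Fin k → Set X) (n : ℕ) : ℕ :=
  sInf {m : ℕ | ∃ f : Fin m → Fin n → Fin k,
    (⋃ j : Fin m, ⋂ i : Fin n, T^[(i : ℕ)] ⁻¹' C (f j i)) = Set.univ}

/-- Topological entropy of a finite cover `C`:
`h(C, T) = inf_n (1/n) log N(⋁_{i=0}^{n-1} T^{-i} C) = lim_n (1/n) log N(...)`. -/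
noncomputable def coverEntropyOf (T : X → X) {k : ℕ} (C : Fin k → Set X) : ℝ :=
  ⨅ n : ℕ, Real.log (coverNum T C (n + 1)) / (n + 1)

/-- `(x, y)` is a topological entropy pair: `x ≠ y` and every two-set open cover
`{Uᶜ, Vᶜ}`, where `U` and `V` are disjoint closed neighbourhoods of `x` and `y`,
has positive topological entropy. -/
def IsEntropyPair [TopologicalSpace X] (T : X → X) (x y : X) : Prop :=
  x ≠ y ∧ ∀ U V : Set X, IsClosed U → IsClosed V → U ∈ 𝓝 x → V ∈ 𝓝 y → Disjoint U V →
    0 < coverEntropyOf T ![Uᶜ, Vᶜ]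

/-- `(x, y)` is an entropy pair for the invariant measure `μ`: `x ≠ y` and every two-set
Borel partition `(A, Aᶜ)` with `x ∈ interior A` and `y ∈ interior Aᶜ` has positive
entropy with respect to `T` and `μ`. -/
def IsMuEntropyPair [TopologicalSpace X] [MeasurableSpace X] (T : X → X) (μ : Measure X)
    (x y : X) : Prop :=
  x ≠ y ∧ ∀ A : Set X, MeasurableSet A → x ∈ interior A → y ∈ interior Aᶜ →
    0 < partKS μ T (fun z => if z ∈ A then (0 : Fin 2) else 1)

/-- `ν` is the relatively independent square `μ ⊠_G μ` of `μ` over the sub-σ-algebra `G`: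
it is determined by `ν(A × B) = ∫ E(1_A|G) · E(1_B|G) dμ` for all Borel sets `A`, `B`. -/
def IsCondSquare (G : MeasurableSpace X) [m0 : MeasurableSpace X] (μ : Measure X)
    (ν : Measure (X × X)) : Prop :=
  ∀ A B : Set X, MeasurableSet[m0] A → MeasurableSet[m0] B →
    ν (A ×ˢ B) = ENNReal.ofReal
      (∫ x, (μ[A.indicator (fun _ => (1 : ℝ)) | G]) x *
            (μ[B.indicator (fun _ => (1 : ℝ)) | G]) x ∂μ)

/-- The σ-algebra `m₁` is contained in `m₂` modulo `μ`-null sets. -/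
def SubModNull [MeasurableSpace X] (μ : Measure X) (m₁ m₂ : MeasurableSpace X) : Prop :=
  ∀ A : Set X, MeasurableSet[m₁] A → ∃ B : Set X, MeasurableSet[m₂] B ∧ μ (A ∆ B) = 0

end Defs

section Defs2

variable {X : Type*}

/-- The σ-algebra `F^- = ⋁_{n ≥ 1} T^{-n} F`. -/
def pastAlg (T : X → X) (F : MeasurableSpace X) : MeasurableSpace X :=
  ⨆ n : ℕ, MeasurableSpace.comap (T^[n + 1]) F

/-- The σ-algebra `F^T = ⋁_{n ∈ ℤ} T^{-n} F`, where `S = T⁻¹`. -/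
def hullAlg (T S : X → X) (F : MeasurableSpace X) : MeasurableSpace X :=
  ⨆ n : ℕ, MeasurableSpace.comap (T^[n]) F ⊔ MeasurableSpace.comap (S^[n]) F

/-- `P` is (the σ-algebra of) an *excellent* measurable partition for `(X, μ, T)` (here
`S = T⁻¹`): it is generating (`σ(P^T) = 𝒜` mod `μ`) and it is generated by an increasing
sequence of finite measurable partitions `Pₙ ↑ P` with `H(Pₙ|Pₙ⁻) − H(Pₙ|P⁻) → 0`. -/
def IsExcellentPartition (P : MeasurableSpace X) [m0 : MeasurableSpace X] (μ : Measure X)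
    (T S : X → X) : Prop :=
  P ≤ m0 ∧ SubModNull μ m0 (hullAlg T S P) ∧
  ∃ (m : ℕ → ℕ) (Q : ∀ n : ℕ, X → Fin (m n)),
    (∀ n, Measurable (Q n)) ∧
    Monotone (fun n => MeasurableSpace.comap (Q n) (⊤ : MeasurableSpace (Fin (m n)))) ∧
    (⨆ n : ℕ, MeasurableSpace.comap (Q n) (⊤ : MeasurableSpace (Fin (m n)))) = P ∧
    Tendsto (fun n => condPartEntropy μ (partPast T (Q n)) (Q n) -
      condPartEntropy μ (pastAlg T P) (Q n)) atTop (𝓝 0)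

end Defs2

/-- Let `x ↦ μ_x` be a regular version of the conditional probability
of `μ` given a sub-σ-algebra `F`. Then `μ ⊠_F μ` vanishes on the diagonal of `X × X` if
and only if `μ_x` is atomless for `μ`-almost all `x`. -/
theorem condSquare_diagonal_null_iff_atomless
    {X : Type*} (F : MeasurableSpace X) [MetricSpace X] [CompactSpace X]
    [m0 : MeasurableSpace X] [BorelSpace X]
    (μ : Measure X) [IsProbabilityMeasure μ] (hF : F ≤ m0)
    (μx : X → Measure X) (hprob : ∀ x, IsProbabilityMeasure (μx x))
    (hmeas : ∀ A : Set X, MeasurableSet A → Measurable[F] fun x => (μx x A).toReal)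
    (hcond : ∀ f : X → ℝ, Measurable f → (∃ C : ℝ, ∀ x, |f x| ≤ C) →
      (fun x => ∫ y, f y ∂(μx x)) =ᵐ[μ] μ[f|F])
    (ν : Measure (X × X)) (hν : IsCondSquare F μ ν) :
    ν {p : X × X | p.1 = p.2} = 0 ↔ ∀ᵐ x ∂μ, ∀ y : X, μx x {y} = 0 := by
    classical
  rcases isEmpty_or_nonempty X with hX | hX
  · exfalso
    have h1 : μ Set.univ = 1 := measure_univ
    rw [Set.univ_eq_empty_iff.2 hX] at h1
    simp at h1
  obtain ⟨c, hc⟩ := TopologicalSpace.exists_dense_seq X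
  set r : ℕ → ℝ := fun n => 1 / (n + 1) with hr
  have hrpos : ∀ n, 0 < r n := fun n => by positivity
  set B : ℕ → ℕ → Set X := fun n => disjointed (fun j => Metric.ball (c j) (r n)) with hB
  have hBmeas : ∀ n j, MeasurableSet (B n j) := fun n =>
    MeasurableSet.disjointed fun j => measurableSet_ball
  have hBdisj : ∀ n, Pairwise (Function.onFun Disjoint (B n)) := fun n => disjoint_disjointed _
  have hBcover : ∀ n, (⋃ j, B n j) = univ := by
    intro n
    rw [hB]
    rw [iUnion_disjointed]
    apply eq_univ_of_forall
    intro x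
    obtain ⟨j, hj⟩ := hc.exists_dist_lt x (hrpos n)
    exact mem_iUnion.2 ⟨j, Metric.mem_ball.2 hj⟩
  have hBsub : ∀ n j, B n j ⊆ Metric.ball (c j) (r n) := fun n => disjointed_subset _
  set C : ∀ n : ℕ, (Fin (n + 1) → ℕ) → Set X :=
    fun n v => ⋂ k : Fin (n + 1), B k (v k) with hCdef
  have hCmeas : ∀ n v, MeasurableSet (C n v) := fun n v =>
    MeasurableSet.iInter fun k => hBmeas k (v k)
  have hCdisj : ∀ n, Pairwise (Function.onFun Disjoint (C n)) := by
    intro n v w hvw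
    obtain ⟨k, hk⟩ := Function.ne_iff.1 hvw
    exact Disjoint.mono (iInter_subset _ k) (iInter_subset _ k) (hBdisj (k : ℕ) hk)
  have hCcover : ∀ n x, ∃ v, x ∈ C n v := by
    intro n x
    have h1 : ∀ k : Fin (n + 1), ∃ j, x ∈ B k j := fun k =>
      mem_iUnion.1 ((hBcover (k : ℕ)) ▸ mem_univ x)
    choose v hv using h1
    exact ⟨v, mem_iInter.2 hv⟩
  set D : ℕ → Set (X × X) := fun n => ⋃ v, C n v ×ˢ C n v with hD
  have hDmeas : ∀ n, MeasurableSet (D n) := fun n =>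
    MeasurableSet.iUnion fun v => (hCmeas n v).prod (hCmeas n v)
  have hDanti : Antitone D := by
    apply antitone_nat_of_succ_le
    intro n p hp
    obtain ⟨v, hv⟩ := mem_iUnion.1 hp
    rw [mem_prod] at hv
    refine mem_iUnion.2 ⟨fun k => v k.castSucc, mem_prod.2 ⟨?_, ?_⟩⟩ <;>
      · refine mem_iInter.2 fun k => ?_
        first
        | exact mem_iInter.1 hv.1 k.castSucc
        | exact mem_iInter.1 hv.2 k.castSucc
  have hDel : MeasurableSet {p : X × X | p.1 = p.2} :=
    (isClosed_eq continuous_fst continuous_snd).measurableSet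
  have hDdiag : (⋂ n, D n) = {p : X × X | p.1 = p.2} := by
    ext p
    constructor
    · intro hp
      have key : ∀ n : ℕ, dist p.1 p.2 < 2 * r n := by
        intro n
        obtain ⟨v, hv⟩ := mem_iUnion.1 (mem_iInter.1 hp n)
        rw [mem_prod] at hv
        have h1 := hBsub n (v (Fin.last n)) (mem_iInter.1 hv.1 (Fin.last n))
        have h2 := hBsub n (v (Fin.last n)) (mem_iInter.1 hv.2 (Fin.last n))
        rw [Metric.mem_ball] at h1 h2
        calc dist p.1 p.2 ≤ dist p.1 (c (v (Fin.last n))) + dist p.2 (c (v (Fin.last n))) :=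
              dist_triangle_right _ _ _
          _ < 2 * r n := by linarith
      have hd0 : dist p.1 p.2 ≤ 0 := by
        by_contra hlt
        push_neg at hlt
        obtain ⟨n, hn⟩ := exists_nat_one_div_lt (show (0 : ℝ) < dist p.1 p.2 / 2 by linarith)
        have := key n
        rw [hr] at this
        simp only at this
        nlinarith
      show p.1 = p.2
      exact eq_of_dist_eq_zero (le_antisymm hd0 dist_nonneg)
    · intro hp
      have hp' : p.1 = p.2 := hp
      refine mem_iInter.2 fun n => ?_
      obtain ⟨v, hv⟩ := hCcover n p.1
      exact mem_iUnion.2 ⟨v, mem_prod.2 ⟨hv, hp' ▸ hv⟩⟩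
  -- measurability of fiber measures
  have hmeas' : ∀ A : Set X, MeasurableSet A → Measurable fun x => μx x A := by
    intro A hA
    have h1 : Measurable fun x => (μx x A).toReal := (hmeas A hA).mono hF le_rfl
    have h2 : (fun x => μx x A) = fun x => ENNReal.ofReal ((μx x A).toReal) := by
      funext x
      haveI := hprob x
      rw [ENNReal.ofReal_toReal (measure_ne_top _ _)]
    rw [h2]
    exact ENNReal.measurable_ofReal.comp h1
  -- conditional expectation of indicators
  have hce : ∀ A : Set X, MeasurableSet A →
      (μ[A.indicator (fun _ => (1 : ℝ)) | F]) =ᵐ[μ] fun x => (μx x A).toReal := by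
    intro A hA
    have hf : Measurable (A.indicator fun _ => (1 : ℝ)) := measurable_const.indicator hA
    have hb : ∃ Cb : ℝ, ∀ x, |A.indicator (fun _ => (1 : ℝ)) x| ≤ Cb :=
      ⟨1, fun x => by by_cases hx : x ∈ A <;> simp [Set.indicator, hx]⟩
    refine ((hcond _ hf hb).symm).trans (Eventually.of_forall fun x => ?_)
    haveI := hprob x
    exact integral_indicator_one (μ := μx x) hA
  -- measure of squares
  have hrect : ∀ A : Set X, MeasurableSet A →
      ν (A ×ˢ A) = ∫⁻ x, μx x A * μx x A ∂μ := by
    intro A hA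
    rw [hν A A hA hA]
    have h1 : (fun x => (μ[A.indicator (fun _ => (1 : ℝ)) | F]) x *
          (μ[A.indicator (fun _ => (1 : ℝ)) | F]) x)
        =ᵐ[μ] fun x => (μx x A).toReal * (μx x A).toReal := (hce A hA).mul (hce A hA)
    rw [integral_congr_ae h1]
    have hm : Measurable fun x => (μx x A).toReal * (μx x A).toReal :=
      ((hmeas A hA).mono hF le_rfl).mul ((hmeas A hA).mono hF le_rfl)
    have hint : Integrable (fun x => (μx x A).toReal * (μx x A).toReal) μ := by
      refine (integrable_const (1 : ℝ)).mono' hm.aestronglyMeasurable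
        (Eventually.of_forall fun x => ?_)
      haveI := hprob x
      have hle : (μx x A).toReal ≤ 1 := by
        have h2 : μx x A ≤ 1 := prob_le_one
        simpa using ENNReal.toReal_mono (by simp) h2
      have hnn : 0 ≤ (μx x A).toReal := ENNReal.toReal_nonneg
      rw [Real.norm_eq_abs, abs_of_nonneg (mul_nonneg hnn hnn)]
      nlinarith
    rw [ofReal_integral_eq_lintegral_ofReal hint (Eventually.of_forall fun x =>
      mul_nonneg ENNReal.toReal_nonneg ENNReal.toReal_nonneg)]
    refine lintegral_congr fun x => ?_
    haveI := hprob x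
    rw [← ENNReal.toReal_mul,
      ENNReal.ofReal_toReal (ENNReal.mul_ne_top (measure_ne_top _ _) (measure_ne_top _ _))]
  -- fiberwise product measure of D n
  have hfiber : ∀ n x, (μx x).prod (μx x) (D n) =
      ∑' v : Fin (n + 1) → ℕ, μx x (C n v) * μx x (C n v) := by
    intro n x
    haveI := hprob x
    have hd : Pairwise (Function.onFun Disjoint fun v : Fin (n + 1) → ℕ => C n v ×ˢ C n v) :=
      fun v w hvw => Disjoint.set_prod_left (hCdisj n hvw) _ _
    rw [hD]
    rw [measure_iUnion hd fun v => (hCmeas n v).prod (hCmeas n v)]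
    exact tsum_congr fun v => Measure.prod_prod _ _
  have hνD : ∀ n, ν (D n) = ∫⁻ x, (μx x).prod (μx x) (D n) ∂μ := by
    intro n
    have hd : Pairwise (Function.onFun Disjoint fun v : Fin (n + 1) → ℕ => C n v ×ˢ C n v) :=
      fun v w hvw => Disjoint.set_prod_left (hCdisj n hvw) _ _
    rw [hD]
    rw [measure_iUnion hd fun v => (hCmeas n v).prod (hCmeas n v)]
    have h1 : ∀ v : Fin (n + 1) → ℕ, ν (C n v ×ˢ C n v) = ∫⁻ x, μx x (C n v) * μx x (C n v) ∂μ :=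
      fun v => hrect _ (hCmeas n v)
    rw [tsum_congr h1, ← lintegral_tsum (f := fun v x => μx x (C n v) * μx x (C n v)) fun v =>
      ((hmeas' _ (hCmeas n v)).mul (hmeas' _ (hCmeas n v))).aemeasurable]
    exact lintegral_congr fun x => (hfiber n x).symm
  have hφmeas : ∀ n, Measurable fun x => (μx x).prod (μx x) (D n) := by
    intro n
    have h1 : (fun x => (μx x).prod (μx x) (D n)) =
        fun x => ∑' v : Fin (n + 1) → ℕ, μx x (C n v) * μx x (C n v) := funext (hfiber n)
    rw [h1]
    exact Measurable.ennreal_tsum fun v => (hmeas' _ (hCmeas n v)).mul (hmeas' _ (hCmeas n v))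
  have hφle : ∀ n x, (μx x).prod (μx x) (D n) ≤ 1 := by
    intro n x
    haveI := hprob x
    exact prob_le_one
  have hφtend : ∀ x, Tendsto (fun n => (μx x).prod (μx x) (D n)) atTop
      (𝓝 ((μx x).prod (μx x) {p : X × X | p.1 = p.2})) := by
    intro x
    haveI := hprob x
    have h1 := tendsto_measure_iInter_atTop (μ := (μx x).prod (μx x))
      (fun n => (hDmeas n).nullMeasurableSet) hDanti ⟨0, measure_ne_top _ _⟩
    rwa [hDdiag] at h1
  have hhm : Measurable fun x => (μx x).prod (μx x) {p : X × X | p.1 = p.2} :=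
    ENNReal.measurable_of_tendsto' atTop hφmeas (tendsto_pi_nhds.2 hφtend)
  -- ν of diagonal
  have hνfin : ν Set.univ ≠ ⊤ := by
    rw [← Set.univ_prod_univ, hν univ univ MeasurableSet.univ MeasurableSet.univ]
    exact ENNReal.ofReal_ne_top
  have htend1 : Tendsto (fun n => ν (D n)) atTop (𝓝 (ν {p : X × X | p.1 = p.2})) := by
    have h1 := tendsto_measure_iInter_atTop (μ := ν)
      (fun n => (hDmeas n).nullMeasurableSet) hDanti
      ⟨0, fun h => hνfin (top_le_iff.1 (h ▸ measure_mono (subset_univ _)))⟩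
    rwa [hDdiag] at h1
  have htend2 : Tendsto (fun n => ν (D n)) atTop
      (𝓝 (∫⁻ x, (μx x).prod (μx x) {p : X × X | p.1 = p.2} ∂μ)) := by
    have h1 := tendsto_lintegral_of_dominated_convergence (μ := μ) 1 hφmeas
      (fun n => Eventually.of_forall (hφle n)) (by simp) (Eventually.of_forall hφtend)
    simpa only [← hνD] using h1
  have key : ν {p : X × X | p.1 = p.2} =
      ∫⁻ x, (μx x).prod (μx x) {p : X × X | p.1 = p.2} ∂μ :=
    tendsto_nhds_unique htend1 htend2
  rw [key, lintegral_eq_zero_iff hhm]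
  constructor
  · intro H
    filter_upwards [H] with x hx y
    haveI := hprob x
    by_contra hy
    have hsub : ({y} : Set X) ×ˢ ({y} : Set X) ⊆ {p : X × X | p.1 = p.2} := by
      rintro ⟨a, b⟩ ⟨ha, hb⟩
      simp only [mem_singleton_iff] at ha hb
      simp [ha, hb]
    have h2 : μx x {y} * μx x {y} ≤ (μx x).prod (μx x) {p : X × X | p.1 = p.2} := by
      rw [← Measure.prod_prod]
      exact measure_mono hsub
    rw [hx] at h2
    simp only [Pi.zero_apply, nonpos_iff_eq_zero, mul_eq_zero, or_self] at h2
    exact hy h2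
  · intro H
    filter_upwards [H] with x hx
    haveI := hprob x
    show (μx x).prod (μx x) {p : X × X | p.1 = p.2} = 0
    rw [Measure.prod_apply hDel]
    have h1 : ∀ y : X, μx x (Prod.mk y ⁻¹' {p : X × X | p.1 = p.2}) = 0 := by
      intro y
      have h2 : (Prod.mk y ⁻¹' {p : X × X | p.1 = p.2}) = {y} := by
        ext z
        simp [eq_comm]
      rw [h2]
      exact hx y
    rw [lintegral_congr h1, lintegral_zero]
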